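/- Let μ be a partition and let r ≥ 0 be an integer. For an integer n ≥ ℓ(μ) (with the convention μ_i = 0 for i > ℓ(μ)) define S_r(n) = ∑_{j=0}^{r} ( t^{−jn} / ∏_{a=1}^{j} (t^a − 1) ) · e_{r−j}( q^{μ₁} t^{−1}, q^{μ₂} t^{−2}, …, q^{μ_n} t^{−n} ) ∈ ℚ(q,t), where e_k is the k-th elementary symmetric polynomial (e_k of fewer than k entries is 0, e₀ = 1, and the empty product for j = 0 is 1). Then S_r(n) is independent of n: for all integers n, n′ ≥ ℓ(μ) one has S_r(n) = S_r(n′). -/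

import Mathlib

noncomputable section

/-- The field `ℚ(q,t)`. -/
abbrev F2 : Type := FractionRing (MvPolynomial (Fin 2) ℚ)

def qq : F2 := algebraMap (MvPolynomial (Fin 2) ℚ) F2 (MvPolynomial.X 0)
def tt : F2 := algebraMap (MvPolynomial (Fin 2) ℚ) F2 (MvPolynomial.X 1)

/-- `S_r(n) = ∑_{j=0}^{r} (t^{-jn} / ∏_{a=1}^{j} (t^a - 1)) · e_{r-j}(q^{μ₁}t^{-1}, …, q^{μ_n}t^{-n})`,
where the partition `μ` is identified with its Young diagram `Y`, `μ_i = Y.rowLen (i-1)`,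
and `e_k` is the `k`-th elementary symmetric polynomial of the listed `n` quantities. -/
def S (Y : YoungDiagram) (r n : ℕ) : F2 :=
  ∑ j ∈ Finset.range (r + 1),
    (tt ^ (-(j * n : ℤ)) / ∏ a ∈ Finset.range j, (tt ^ (a + 1) - 1)) *
      Multiset.esymm
        (((List.range n).map fun i => qq ^ Y.rowLen i * tt ^ (-(i + 1 : ℤ)) : List F2) :
          Multiset F2) (r - j)

lemma esymm_cons' {R : Type*} [CommSemiring R] (x : R) (s : Multiset R) (k : ℕ) :
    (x ::ₘ s).esymm (k + 1) = s.esymm (k + 1) + x * s.esymm k := by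
  simp [Multiset.esymm, Multiset.powersetCard_cons, Multiset.map_map, Function.comp_def,
    Multiset.sum_map_mul_left]

lemma esymm_zero' {R : Type*} [CommSemiring R] (s : Multiset R) : s.esymm 0 = 1 := by
  simp [Multiset.esymm]

lemma tt_ne_zero : tt ≠ 0 := by
  have h := IsFractionRing.injective (MvPolynomial (Fin 2) ℚ) F2
  intro hc
  have : (MvPolynomial.X 1 : MvPolynomial (Fin 2) ℚ) = 0 := by
    apply h; rw [map_zero]; exact hc
  exact MvPolynomial.X_ne_zero 1 this

lemma tt_pow_sub_one_ne_zero (k : ℕ) : tt ^ (k + 1) - 1 ≠ 0 := by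
  have h := IsFractionRing.injective (MvPolynomial (Fin 2) ℚ) F2
  intro hc
  rw [sub_eq_zero] at hc
  have : (MvPolynomial.X 1 : MvPolynomial (Fin 2) ℚ) ^ (k + 1) = 1 := by
    apply h; rw [map_pow, map_one]; exact hc
  have hdeg := congrArg MvPolynomial.totalDegree this
  rw [MvPolynomial.totalDegree_X_pow, MvPolynomial.totalDegree_one] at hdeg
  exact Nat.succ_ne_zero k hdeg

/-- coefficient `c_j(m) = t^{-jm} / ∏_{a=1}^j (t^a - 1)` -/
def C (j m : ℕ) : F2 :=
  tt ^ (-(j * m : ℤ)) / ∏ a ∈ Finset.range j, (tt ^ (a + 1) - 1)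

lemma S_eq (Y : YoungDiagram) (r n : ℕ) :
    S Y r n = ∑ j ∈ Finset.range (r + 1), C j n *
      Multiset.esymm
        (((List.range n).map fun i => qq ^ Y.rowLen i * tt ^ (-(i + 1 : ℤ)) : List F2) :
          Multiset F2) (r - j) := rfl

lemma C_zero (m : ℕ) : C 0 m = 1 := by simp [C]

lemma prod_ne : ∀ j : ℕ, (∏ a ∈ Finset.range j, (tt ^ (a + 1) - 1)) ≠ 0 :=
  fun j => Finset.prod_ne_zero_iff.2 fun a _ => tt_pow_sub_one_ne_zero a

lemma C_key (j n : ℕ) :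
    C (j + 1) n = C (j + 1) (n + 1) + C j (n + 1) * tt ^ (-(n + 1 : ℤ)) := by
  have hne : (tt ^ (j + 1) - 1) ≠ 0 := tt_pow_sub_one_ne_zero j
  have hP : (∏ a ∈ Finset.range (j + 1), (tt ^ (a + 1) - 1)) =
      (∏ a ∈ Finset.range j, (tt ^ (a + 1) - 1)) * (tt ^ (j + 1) - 1) :=
    Finset.prod_range_succ _ _
  rw [C, C, C, hP, div_mul_eq_mul_div]
  rw [← mul_div_mul_right (tt ^ (-((j : ℤ) * ((n + 1 : ℕ) : ℤ))) * tt ^ (-((n : ℤ) + 1))) _ hne,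
    ← add_div]
  congr 1
  rw [← zpow_add₀ tt_ne_zero, mul_sub, mul_one, ← zpow_natCast tt (j + 1),
    ← zpow_add₀ tt_ne_zero]
  have e1 : (-((j : ℤ) * ((n + 1 : ℕ) : ℤ)) + -((n : ℤ) + 1) + ((j + 1 : ℕ) : ℤ))
      = -(((j + 1 : ℕ) : ℤ) * (n : ℤ)) := by push_cast; ring
  have e2 : (-((j : ℤ) * ((n + 1 : ℕ) : ℤ)) + -((n : ℤ) + 1))
      = -(((j + 1 : ℕ) : ℤ) * ((n + 1 : ℕ) : ℤ)) := by push_cast; ring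
  rw [e1, e2]
  ring

lemma S_step (Y : YoungDiagram) (r n : ℕ) (hn : Y.colLen 0 ≤ n) :
    S Y r (n + 1) = S Y r n := by
  have hrow : Y.rowLen n = 0 := by
    by_contra h
    have hm : (n, 0) ∈ Y := YoungDiagram.mem_iff_lt_rowLen.2 (Nat.pos_of_ne_zero h)
    exact absurd (YoungDiagram.mem_iff_lt_colLen.1 hm) (not_lt.2 hn)
  set f : ℕ → F2 := fun i => qq ^ Y.rowLen i * tt ^ (-(i + 1 : ℤ)) with hf
  set M : Multiset F2 := (((List.range n).map f : List F2) : Multiset F2) with hM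
  set x : F2 := tt ^ (-(n + 1 : ℤ)) with hx
  have hMx : (((List.range (n + 1)).map f : List F2) : Multiset F2) = x ::ₘ M := by
    rw [List.range_succ, List.map_append]
    have hfn : f n = x := by simp [hf, hrow, hx]
    simp [hfn, hM]
  rw [S_eq, S_eq, ← hf, ← hM, hMx]
  have hsplit : ∑ j ∈ Finset.range (r + 1), C j (n + 1) * (x ::ₘ M).esymm (r - j)
      = ∑ j ∈ Finset.range (r + 1), C j (n + 1) * M.esymm (r - j)
        + ∑ j ∈ Finset.range r, C j (n + 1) * x * M.esymm (r - 1 - j) := by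
    have hterm : ∀ j ∈ Finset.range r, C j (n + 1) * (x ::ₘ M).esymm (r - j)
        = C j (n + 1) * M.esymm (r - j) + C j (n + 1) * x * M.esymm (r - 1 - j) := by
      intro j hj
      rw [Finset.mem_range] at hj
      have h1 : r - j = (r - 1 - j) + 1 := by omega
      rw [h1, esymm_cons']; ring
    rw [Finset.sum_range_succ, Finset.sum_congr rfl hterm, Finset.sum_add_distrib,
      Finset.sum_range_succ (fun j => C j (n + 1) * M.esymm (r - j)),
      Nat.sub_self, esymm_zero', esymm_zero']
    ring
  have hRHS : ∑ j ∈ Finset.range (r + 1), C j n * M.esymm (r - j)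
      = ∑ j ∈ Finset.range (r + 1), C j (n + 1) * M.esymm (r - j)
        + ∑ j ∈ Finset.range r, C j (n + 1) * x * M.esymm (r - 1 - j) := by
    rw [Finset.sum_range_succ' (fun j => C j n * M.esymm (r - j)),
      Finset.sum_range_succ' (fun j => C j (n + 1) * M.esymm (r - j))]
    have hterm : ∀ j ∈ Finset.range r, C (j + 1) n * M.esymm (r - (j + 1))
        = C (j + 1) (n + 1) * M.esymm (r - (j + 1)) + C j (n + 1) * x * M.esymm (r - 1 - j) := by
      intro j _
      have h1 : r - (j + 1) = r - 1 - j := by omega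
      rw [C_key j n, hx, h1]; ring
    rw [Finset.sum_congr rfl hterm, Finset.sum_add_distrib, C_zero, C_zero]
    ring
  rw [hsplit, hRHS]

/-- `S_r(n)` is independent of `n` for `n ≥ ℓ(μ) = Y.colLen 0`. -/
theorem S_stable (Y : YoungDiagram) (r : ℕ) (n n' : ℕ)
    (hn : Y.colLen 0 ≤ n) (hn' : Y.colLen 0 ≤ n') :
    S Y r n = S Y r n' := by
  have aux : ∀ m, Y.colLen 0 ≤ m → S Y r m = S Y r (Y.colLen 0) := by
    intro m hm
    induction m, hm using Nat.le_induction with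
    | base => rfl
    | succ k hk ih => rw [S_step Y r k hk, ih]
  rw [aux n hn, aux n' hn']
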